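/- Let G be a graph and v a vertex with degree strictly greater than k. Then G has a vertex cover of size at most k if and only if G − v (deleting v and its incident edges) has a vertex cover of size at most k − 1. -/

import Mathlib

def IsVC {V : Type*} (G : SimpleGraph V) (S : Set V) : Prop :=
  ∀ ⦃u w : V⦄, G.Adj u w → u ∈ S ∨ w ∈ S

theorem stmt_7 {V : Type*} [Fintype V] [DecidableEq V] (G : SimpleGraph V)
    [DecidableRel G.Adj] (k : ℕ) (hk : 0 < k) (v : V) (hdeg : k < G.degree v) :
    (∃ S : Set V, IsVC G S ∧ S.ncard ≤ k) ↔
      (∃ S : Set {u : V // u ≠ v}, IsVC (G.induce {u : V | u ≠ v}) S ∧ S.ncard ≤ k - 1) := by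
  constructor
  · rintro ⟨S, hS, hcard⟩
    have hvS : v ∈ S := by
      by_contra hv
      have hsub : (G.neighborSet v) ⊆ S := by
        intro w hw
        rcases hS hw with h | h
        · exact absurd h hv
        · exact h
      have := Set.ncard_le_ncard hsub (Set.toFinite S)
      have hns : (G.neighborSet v).ncard = G.degree v := by
        simp [Set.ncard_eq_toFinset_card', SimpleGraph.degree, SimpleGraph.neighborFinset]
      omega
    refine ⟨{u : {u : V // u ≠ v} | (u : V) ∈ S}, ?_, ?_⟩
    · intro u w h
      rcases hS h with h' | h'
      · exact Or.inl h'
      · exact Or.inr h'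
    · have himg : Subtype.val '' {u : {u : V // u ≠ v} | (u : V) ∈ S} ⊆ S \ {v} := by
        rintro x ⟨u, hu, rfl⟩
        exact ⟨hu, u.2⟩
      have h1 : ({u : {u : V // u ≠ v} | (u : V) ∈ S}).ncard
          = (Subtype.val '' {u : {u : V // u ≠ v} | (u : V) ∈ S}).ncard :=
        (Set.ncard_image_of_injective _ Subtype.val_injective).symm
      have h2 := Set.ncard_le_ncard himg (Set.toFinite _)
      have h3 : (S \ {v}).ncard = S.ncard - 1 := by
        rw [Set.ncard_diff_singleton_of_mem hvS]
      omega
  · rintro ⟨T, hT, hcard⟩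
    refine ⟨insert v (Subtype.val '' T), ?_, ?_⟩
    · intro u w h
      by_cases hu : u = v
      · exact Or.inl (by simp [hu])
      by_cases hw : w = v
      · exact Or.inr (by simp [hw])
      have hadj : (G.induce {u : V | u ≠ v}).Adj ⟨u, hu⟩ ⟨w, hw⟩ := h
      rcases hT hadj with h' | h'
      · exact Or.inl (Or.inr ⟨⟨u, hu⟩, h', rfl⟩)
      · exact Or.inr (Or.inr ⟨⟨w, hw⟩, h', rfl⟩)
    · have h1 : (insert v (Subtype.val '' T)).ncard ≤ (Subtype.val '' T).ncard + 1 :=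
        Set.ncard_insert_le _ _
      have h2 : (Subtype.val '' T).ncard = T.ncard :=
        Set.ncard_image_of_injective _ Subtype.val_injective
      omega
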